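/- arXiv:2210.07368 — 4 statements merged into one kernel-verified Lean document; each statement's English description precedes it below -/
import Mathlib

section
/- Let A be a commutative ring and p, E ∈ A. Assume that A is E-adically complete and separated, i.e., the natural map A → lim_n A/E^n A is bijective, and that for every n ≥ 1 the element p is a nonzerodivisor on A/E^n A. Then A/pA is E-adically complete and separated, i.e., the natural map A/pA → lim_n A/(pA + E^n A) is bijective. -/
/-- If `A` is `E`-adically complete and separated (i.e. the natural map
`A → lim_n A/EⁿA` is bijective, which is the content of `IsAdicComplete (span {E}) A`)
and `p` is a nonzerodivisor on `A/EⁿA` for every `n ≥ 1`, then `A/pA` is `E`-adically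
complete and separated, i.e. the natural map `A/pA → lim_n A/(pA + EⁿA)` is bijective
(the content of `IsAdicComplete` for the image ideal of `(E)` in `A/pA`). -/
theorem purity_stmt1 {A : Type*} [CommRing A] (p E : A)
    (hcomplete : IsAdicComplete (Ideal.span {E}) A)
    (hreg : ∀ n : ℕ, 1 ≤ n → ∀ x : A ⧸ (Ideal.span {E} ^ n), p • x = 0 → x = 0) :
    IsAdicComplete (Ideal.span {Ideal.Quotient.mk (Ideal.span {p}) E})
      (A ⧸ Ideal.span {p}) := by
  set P := Ideal.span {p} with hP
  set I := Ideal.span {E} with hI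
  set J := Ideal.span {Ideal.Quotient.mk P E} with hJ
  -- reduce `• ⊤` to the ideal itself
  have htop : ∀ n : ℕ, (J ^ n • ⊤ : Submodule (A ⧸ P) (A ⧸ P)) = (J ^ n : Ideal (A ⧸ P)) := by
    intro n; rw [Ideal.smul_eq_mul, Ideal.mul_top]
  have htopA : ∀ n : ℕ, (I ^ n • ⊤ : Submodule A A) = (I ^ n : Ideal A) := by
    intro n; rw [Ideal.smul_eq_mul, Ideal.mul_top]
  -- key membership lemma
  have key : ∀ (n : ℕ) (a : A),
      Ideal.Quotient.mk P a ∈ (J ^ n : Ideal (A ⧸ P)) ↔ a ∈ P ⊔ I ^ n := by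
    intro n a
    rw [hJ, Ideal.span_singleton_pow, ← map_pow, Ideal.mem_span_singleton, hI,
      Ideal.span_singleton_pow]
    constructor
    · rintro ⟨c, hc⟩
      obtain ⟨b, rfl⟩ := Ideal.Quotient.mk_surjective c
      rw [← map_mul, Ideal.Quotient.eq] at hc
      have h1 : a = (a - E ^ n * b) + E ^ n * b := by ring
      rw [h1]
      exact Submodule.add_mem _ (Ideal.mem_sup_left hc)
        (Ideal.mem_sup_right (Ideal.mem_span_singleton.2 ⟨b, rfl⟩))
    · intro ha
      obtain ⟨x, hx, y, hy, hxy⟩ := Submodule.mem_sup.1 ha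
      obtain ⟨c, rfl⟩ := Ideal.mem_span_singleton.1 hy
      refine ⟨Ideal.Quotient.mk P c, ?_⟩
      rw [← map_mul, Ideal.Quotient.eq]
      have : a - E ^ n * c = x := by rw [← hxy]; ring
      rw [this]; exact hx
  -- regularity in terms of ideals
  have reg : ∀ n : ℕ, 1 ≤ n → ∀ a : A, p * a ∈ I ^ n → a ∈ I ^ n := by
    intro n hn a ha
    have := hreg n hn (Ideal.Quotient.mk (I ^ n) a) ?_
    · exact (Ideal.Quotient.eq_zero_iff_mem).1 this
    · have : p • Ideal.Quotient.mk (I ^ n) a = Ideal.Quotient.mk (I ^ n) (p * a) := rfl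
      rw [this, Ideal.Quotient.eq_zero_iff_mem]; exact ha
  have haus := hcomplete.toIsHausdorff.haus
  have prec := fun {f : ℕ → A} => hcomplete.toIsPrecomplete.prec (f := f)
  have H1 : IsHausdorff J (A ⧸ P) := by
    constructor
    intro x hx
    obtain ⟨a, rfl⟩ := Ideal.Quotient.mk_surjective x
    have hmem : ∀ n : ℕ, a ∈ P ⊔ I ^ n := by
      intro n
      have := (SModEq.zero).1 (hx n)
      rw [htop n] at this
      exact (key n a).1 this
    -- choose b n with a - p * b n ∈ I ^ n
    have hb : ∀ n : ℕ, ∃ b : A, a - p * b ∈ I ^ n := by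
      intro n
      obtain ⟨x, hx', y, hy, hxy⟩ := Submodule.mem_sup.1 (hmem n)
      obtain ⟨c, rfl⟩ := Ideal.mem_span_singleton.1 hx'
      exact ⟨c, by rw [show a - p * c = y by rw [← hxy]; ring]; exact hy⟩
    choose b hbmem using hb
    -- b is Cauchy
    have hcauchy : ∀ m n : ℕ, m ≤ n → b m ≡ b n [SMOD (I ^ m • ⊤ : Submodule A A)] := by
      intro m n hmn
      rw [SModEq.sub_mem, htopA]
      rcases Nat.eq_zero_or_pos m with rfl | hm
      · simp
      · apply reg m hm
        have : p * (b m - b n) = (a - p * b n) - (a - p * b m) := by ring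
        rw [this]
        exact Submodule.sub_mem _ (Ideal.pow_le_pow_right hmn (hbmem n)) (hbmem m)
    obtain ⟨L, hL⟩ := prec (fun {m n} hmn => hcauchy m n hmn)
    have hfin : ∀ n : ℕ, a - p * L ∈ I ^ n := by
      intro n
      have h1 := (SModEq.sub_mem).1 (hL n)
      rw [htopA] at h1
      have : a - p * L = (a - p * b n) + p * (b n - L) := by ring
      rw [this]
      exact Submodule.add_mem _ (hbmem n) (Ideal.mul_mem_left _ _ h1)
    have : a - p * L = 0 := by
      apply haus
      intro n
      rw [SModEq.zero, htopA]
      exact hfin n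
    have ha : a = p * L := by linear_combination this
    rw [Ideal.Quotient.eq_zero_iff_mem, ha]
    exact Ideal.mem_span_singleton.2 ⟨L, rfl⟩
  have H2 : IsPrecomplete J (A ⧸ P) := by
    constructor
    intro f hf
    choose g hg using fun n => Ideal.Quotient.mk_surjective (f n)
    have hgdiff : ∀ m n : ℕ, m ≤ n → g m - g n ∈ P ⊔ I ^ m := by
      intro m n hmn
      have := (SModEq.sub_mem).1 (hf hmn)
      rw [htop] at this
      rw [← hg m, ← hg n, ← map_sub] at this
      exact (key m _).1 this
    -- inductive correction step
    have step : ∀ (n : ℕ) (c : A), c - g n ∈ P →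
        ∃ c' : A, c' - g (n + 1) ∈ P ∧ c' - c ∈ I ^ n := by
      intro n c hc
      have h1 : g (n + 1) - c ∈ P ⊔ I ^ n := by
        have h2 : g (n + 1) - c = -(g n - g (n+1)) + -(c - g n) := by ring
        rw [h2]
        exact Submodule.add_mem _ (Submodule.neg_mem _ (hgdiff n (n+1) (Nat.le_succ n)))
          (Submodule.neg_mem _ (Ideal.mem_sup_left hc))
      obtain ⟨x, hx, y, hy, hxy⟩ := Submodule.mem_sup.1 h1
      refine ⟨c + y, ?_, by simpa using hy⟩
      have h3 : c + y - g (n + 1) = -x := by linear_combination hxy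
      rw [h3]; exact Submodule.neg_mem _ hx
    choose F hF1 hF2 using step
    -- build the corrected sequence
    have hcex : ∃ c : ℕ → A, (∀ n, c n - g n ∈ P) ∧ (∀ n, c (n + 1) - c n ∈ I ^ n) := by
      refine ⟨fun n => (Nat.rec (motive := fun n => {x : A // x - g n ∈ P})
        ⟨g 0, by simp⟩ (fun n d => ⟨F n d.1 d.2, hF1 n d.1 d.2⟩) n).1,
        fun n => (Nat.rec (motive := fun n => {x : A // x - g n ∈ P})
        ⟨g 0, by simp⟩ (fun n d => ⟨F n d.1 d.2, hF1 n d.1 d.2⟩) n).2,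
        fun n => hF2 n _ _⟩
    obtain ⟨c, hcP, hcstep⟩ := hcex
    have hcCauchy : ∀ m n : ℕ, m ≤ n → c n - c m ∈ I ^ m := by
      intro m n hmn
      induction n with
      | zero =>
        have : m = 0 := Nat.le_zero.1 hmn
        subst this; simp
      | succ k ih =>
        rcases Nat.lt_or_ge m (k + 1) with h | h
        · have hk : m ≤ k := Nat.lt_succ_iff.1 h
          have : c (k + 1) - c m = (c (k + 1) - c k) + (c k - c m) := by ring
          rw [this]
          exact Submodule.add_mem _ (Ideal.pow_le_pow_right hk (hcstep k)) (ih hk)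
        · have : m = k + 1 := le_antisymm hmn h
          subst this; simp
    obtain ⟨L, hL⟩ := prec (f := c) (by
      intro m n hmn
      rw [SModEq.sub_mem, htopA]
      simpa using Submodule.neg_mem _ (hcCauchy m n hmn))
    refine ⟨Ideal.Quotient.mk P L, fun n => ?_⟩
    rw [SModEq.sub_mem, htop, ← hg n, ← map_sub]
    apply (key n _).2
    have h1 := (SModEq.sub_mem).1 (hL n)
    rw [htopA] at h1
    have : g n - L = -(c n - g n) + (c n - L) := by ring
    rw [this]
    exact Submodule.add_mem _ (Ideal.mem_sup_left (Submodule.neg_mem _ (hcP n)))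
      (Ideal.mem_sup_right h1)
  exact { toIsHausdorff := H1, toIsPrecomplete := H2 }
end

section
/- Let A be a commutative ring, p ∈ A, and let f : M → N be an A-linear map of A-modules. Assume that p is a nonzerodivisor on M and on N, and that the induced map M/pM → N/pN is injective. Then for every n ≥ 1 the induced map M/p^n M → N/p^n N is injective. -/
/-- A linear map always carries `pM` into `pN`, so it induces maps on the quotients. -/
theorem smul_top_le_comap {A M N : Type*} [CommRing A] [AddCommGroup M] [Module A M]
    [AddCommGroup N] [Module A N] (I : Ideal A) (f : M →ₗ[A] N) :
    (I • ⊤ : Submodule A M) ≤ Submodule.comap f (I • ⊤ : Submodule A N) := by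
  rw [← Submodule.map_le_iff_le_comap, Submodule.map_smul'']
  exact Submodule.smul_mono le_rfl le_top

open Pointwise in
lemma mem_span_smul_top {A M : Type*} [CommRing A] [AddCommGroup M] [Module A M]
    (q : A) (x : M) : x ∈ (Ideal.span {q} • ⊤ : Submodule A M) ↔ ∃ y, q • y = x := by
  constructor
  · intro h
    refine Submodule.smul_induction_on h ?_ ?_
    · intro r hr m _
      obtain ⟨c, rfl⟩ := Ideal.mem_span_singleton'.mp hr
      exact ⟨c • m, by rw [smul_comm, ← smul_assoc, smul_eq_mul]⟩
    · rintro a b ⟨ya, rfl⟩ ⟨yb, rfl⟩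
      exact ⟨ya + yb, by rw [smul_add]⟩
  · rintro ⟨y, rfl⟩
    exact Submodule.smul_mem_smul (Ideal.mem_span_singleton_self q) trivial

lemma inj_iff_aux {A M N : Type*} [CommRing A] [AddCommGroup M] [Module A M]
    [AddCommGroup N] [Module A N] (q : A) (f : M →ₗ[A] N) :
    Function.Injective
      (Submodule.mapQ (Ideal.span {q} • ⊤) (Ideal.span {q} • ⊤) f
        (smul_top_le_comap (Ideal.span {q}) f)) ↔
    ∀ x : M, f x ∈ (Ideal.span {q} • ⊤ : Submodule A N) →
      x ∈ (Ideal.span {q} • ⊤ : Submodule A M) := by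
  constructor
  · intro h x hx
    have : Submodule.mapQ _ _ f (smul_top_le_comap (Ideal.span {q}) f)
        (Submodule.Quotient.mk x) = 0 := by
      rw [Submodule.mapQ_apply, Submodule.Quotient.mk_eq_zero]; exact hx
    have := h (a₁ := Submodule.Quotient.mk x) (a₂ := 0) (by simpa using this)
    rwa [Submodule.Quotient.mk_eq_zero] at this
  · intro h
    rw [injective_iff_map_eq_zero]
    intro a ha
    obtain ⟨x, rfl⟩ := Submodule.Quotient.mk_surjective _ a
    rw [Submodule.mapQ_apply, Submodule.Quotient.mk_eq_zero] at ha
    rw [Submodule.Quotient.mk_eq_zero]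
    exact h x ha

/-- If `p` is a nonzerodivisor on `M` and on `N` and the induced map `M/pM → N/pN`
is injective, then for every `n ≥ 1` the induced map `M/pⁿM → N/pⁿN` is injective. -/
theorem purity_stmt2 {A M N : Type*} [CommRing A] [AddCommGroup M] [Module A M]
    [AddCommGroup N] [Module A N] (p : A) (f : M →ₗ[A] N)
    (hM : ∀ x : M, p • x = 0 → x = 0) (hN : ∀ y : N, p • y = 0 → y = 0)
    (hinj : Function.Injective
      (Submodule.mapQ (Ideal.span {p} • ⊤) (Ideal.span {p} • ⊤) f
        (smul_top_le_comap (Ideal.span {p}) f))) :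
    ∀ n : ℕ, 1 ≤ n →
      Function.Injective
        (Submodule.mapQ (Ideal.span {p ^ n} • ⊤) (Ideal.span {p ^ n} • ⊤) f
          (smul_top_le_comap (Ideal.span {p ^ n}) f)) := by
  rw [inj_iff_aux] at hinj
  have key : ∀ n : ℕ, 1 ≤ n → ∀ x : M, (∃ w, p ^ n • w = f x) → ∃ y, p ^ n • y = x := by
    intro n hn
    induction n with
    | zero => omega
    | succ n ih =>
      intro x ⟨w, hw⟩
      rcases Nat.eq_or_lt_of_le hn with h1 | h1
      · -- n + 1 = 1
        have hn0 : n = 0 := by omega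
        subst hn0
        have := (mem_span_smul_top p (f x)).mpr ⟨w, by simpa using hw⟩
        obtain ⟨y, hy⟩ := (mem_span_smul_top p x).mp (hinj x this)
        exact ⟨y, by simpa using hy⟩
      · have hn' : 1 ≤ n := by omega
        -- first f x ∈ pN, so x = p • y
        have h1N : f x ∈ (Ideal.span {p} • ⊤ : Submodule A N) := by
          rw [mem_span_smul_top]
          exact ⟨p ^ n • w, by rw [← hw, ← mul_smul, ← pow_succ']⟩
        obtain ⟨y, hy⟩ := (mem_span_smul_top p x).mp (hinj x h1N)
        -- p • f y = p^{n+1} • w, so f y = p^n • w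
        have hfy : p • f y = p • (p ^ n • w) := by
          rw [← map_smul, hy, ← hw, ← mul_smul, ← pow_succ']
        have hfy' : f y = p ^ n • w := by
          have := hN (f y - p ^ n • w) (by rw [smul_sub, hfy, sub_self])
          exact sub_eq_zero.mp this
        obtain ⟨z, hz⟩ := ih hn' y ⟨w, hfy'.symm⟩
        exact ⟨z, by rw [pow_succ', mul_smul, hz, hy]⟩
  intro n hn
  rw [inj_iff_aux]
  intro x hx
  rw [mem_span_smul_top] at hx ⊢
  exact key n hn x hx
end

section
/- Let D be a commutative ring, let B and C be subrings of D, and set A = B ∩ C, a subring of D. Let M be a finitely generated projective A-module. Then all the base-change maps X ⊗_A M → D ⊗_A M for a subring X of D containing A are injective, and inside D ⊗_A M the intersection of the image of B ⊗_A M and the image of C ⊗_A M equals the image of M = A ⊗_A M. -/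
open TensorProduct LinearMap


/-- A subring `X` of `D` containing a subring `A`, viewed as an `A`-subalgebra of `D`. -/
def Subring.toSubalgebraOfLe {D : Type*} [CommRing D] {A X : Subring D} (h : A ≤ X) :
    Subalgebra ↥A D :=
  { X with algebraMap_mem' := fun a => h a.2 }

set_option synthInstance.maxHeartbeats 1000000 in
set_option maxHeartbeats 2000000 in
/-- Let `B, C` be subrings of `D` and `A = B ∩ C`. If `M` is a finitely generated
projective `A`-module, then all base-change maps `X ⊗[A] M → D ⊗[A] M`, for `X` a
subring of `D` containing `A` (i.e. an `A`-subalgebra of `D`), are injective, and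
inside `D ⊗[A] M` the intersection of the images of `B ⊗[A] M` and of `C ⊗[A] M`
equals the image of `M = A ⊗[A] M` (embedded via `x ↦ 1 ⊗ x`). -/
theorem purity_stmt4 {D : Type*} [CommRing D] (B C : Subring D)
    (M : Type*) [AddCommGroup M] [Module ↥(B ⊓ C) M]
    [Module.Finite ↥(B ⊓ C) M] [Module.Projective ↥(B ⊓ C) M] :
    (∀ X : Subalgebra ↥(B ⊓ C) D,
        Function.Injective (LinearMap.rTensor M X.val.toLinearMap)) ∧
      LinearMap.range
          (LinearMap.rTensor M
            (Subring.toSubalgebraOfLe (inf_le_left : B ⊓ C ≤ B)).val.toLinearMap) ⊓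
        LinearMap.range
          (LinearMap.rTensor M
            (Subring.toSubalgebraOfLe (inf_le_right : B ⊓ C ≤ C)).val.toLinearMap) =
      LinearMap.range (TensorProduct.mk ↥(B ⊓ C) D M 1) := by
  classical
  set A := ↥(B ⊓ C) with hA
  obtain ⟨s, hs⟩ := Module.projective_def.mp ‹Module.Projective A M›
  set π : (M →₀ A) →ₗ[A] M := Finsupp.linearCombination A id with hπ
  have hinj : ∀ X : Subalgebra A D,
      Function.Injective (LinearMap.rTensor M X.val.toLinearMap) := fun X =>
    Module.Flat.rTensor_preserves_injective_linearMap _ Subtype.val_injective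
  refine ⟨hinj, ?_⟩
  set e := TensorProduct.finsuppScalarRight A A D M with he
  set F : D ⊗[A] M →ₗ[A] (M →₀ D) := e.toLinearMap ∘ₗ LinearMap.lTensor D s with hF
  have key : ∀ (X : Subalgebra A D) (t : (↥X) ⊗[A] M) (i : M),
      F (LinearMap.rTensor M X.val.toLinearMap t) i ∈ X := by
    intro X t i
    induction t with
    | zero => simp only [map_zero, Finsupp.coe_zero, Pi.zero_apply]; exact zero_mem X
    | tmul x m =>
      have h1 : F ((x : D) ⊗ₜ[A] m) i = (s m) i • (x : D) := by
        simp [hF, he, TensorProduct.finsuppScalarRight_apply_tmul_apply]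
      rw [LinearMap.rTensor_tmul]
      simp only [AlgHom.toLinearMap_apply, Subalgebra.coe_val] at *
      rw [h1]
      exact X.smul_mem x.2 _
    | add u v hu hv =>
      rw [map_add, map_add]
      exact X.add_mem hu hv
  ext x
  simp only [Submodule.mem_inf, LinearMap.mem_range]
  constructor
  · rintro ⟨⟨b, hb⟩, ⟨c, hc⟩⟩
    have hBmem : ∀ i, F x i ∈ B := fun i => by
      have := key (Subring.toSubalgebraOfLe (inf_le_left : B ⊓ C ≤ B)) b i
      rwa [hb] at this
    have hCmem : ∀ i, F x i ∈ C := fun i => by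
      have := key (Subring.toSubalgebraOfLe (inf_le_right : B ⊓ C ≤ C)) c i
      rwa [hc] at this
    have hAmem : ∀ i, F x i ∈ B ⊓ C := fun i => ⟨hBmem i, hCmem i⟩
    set f : M →₀ A := Finsupp.mk (F x).support (fun i => ⟨F x i, hAmem i⟩)
      (fun i => by
        rw [Finsupp.mem_support_iff]
        exact not_congr ⟨fun h => Subtype.ext h, fun h => congrArg Subtype.val h⟩) with hf
    have hef : e ((1 : D) ⊗ₜ[A] f) = F x := by
      ext i
      rw [TensorProduct.finsuppScalarRight_apply_tmul_apply]
      show (f i : D) * 1 = F x i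
      simp [hf]
    have hx1 : LinearMap.lTensor D s x = (1 : D) ⊗ₜ[A] f := by
      apply e.injective
      rw [hef]
      rfl
    have hx2 : LinearMap.lTensor D π (LinearMap.lTensor D s x) = x := by
      rw [← LinearMap.lTensor_comp_apply]
      have : π ∘ₗ s = LinearMap.id := LinearMap.ext fun m => hs m
      rw [this, LinearMap.lTensor_id, LinearMap.id_apply]
    refine ⟨π f, ?_⟩
    rw [← hx2, hx1]
    simp [TensorProduct.mk_apply, LinearMap.lTensor_tmul]
    rfl
  · rintro ⟨m, rfl⟩
    refine ⟨⟨(1 : ↥(Subring.toSubalgebraOfLe (inf_le_left : B ⊓ C ≤ B))) ⊗ₜ[A] m, by simp; rfl⟩,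
      ⟨(1 : ↥(Subring.toSubalgebraOfLe (inf_le_right : B ⊓ C ≤ C))) ⊗ₜ[A] m, by simp; rfl⟩⟩
end

section
/- Let D be a commutative ring and p ∈ D a nonzerodivisor such that D is p-adically separated, i.e., ∩_n p^n D = 0. Let B and C be subrings of D, and let A be a subring of B ∩ C with p ∈ A. Assume: (i) A is p-adically complete and separated, i.e., the natural map A → lim_n A/p^n A is bijective; (ii) B ∩ pD = pB and C ∩ pD = pC; (iii) for every x ∈ B ∩ C there exists a ∈ A with x − a ∈ pD. Then A = B ∩ C. -/
open Pointwise

set_option maxHeartbeats 1000000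

/-- Let `D` be a commutative ring and `p ∈ D` a nonzerodivisor such that `D` is
`p`-adically separated (`⋂ₙ pⁿD = 0`). Let `B, C` be subrings of `D` and `A` a subring
of `B ∩ C` with `p ∈ A`. If (i) `A` is `p`-adically complete and separated, (ii)
`B ∩ pD = pB` and `C ∩ pD = pC`, and (iii) every `x ∈ B ∩ C` is congruent mod `pD`
to an element of `A`, then `A = B ⊓ C`. -/
theorem purity_stmt5 {D : Type*} [CommRing D] (p : D)
    (hreg : ∀ x : D, p * x = 0 → x = 0)
    (hsep : (⨅ n : ℕ, Ideal.span {p} ^ n) = (⊥ : Ideal D))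
    (B C A : Subring D) (hA : A ≤ B ⊓ C) (hpA : p ∈ A)
    (hcomplete : IsAdicComplete (Ideal.span {(⟨p, hpA⟩ : ↥A)}) ↥A)
    (hB : (B : Set D) ∩ p • (Set.univ : Set D) = p • (B : Set D))
    (hC : (C : Set D) ∩ p • (Set.univ : Set D) = p • (C : Set D))
    (happrox : ∀ x ∈ B ⊓ C, ∃ a ∈ A, x - a ∈ p • (Set.univ : Set D)) :
    A = B ⊓ C := by
  set π : ↥A := ⟨p, hpA⟩ with hπ
  set I : Ideal ↥A := Ideal.span {π} with hI
  -- key step: from x ∈ B ⊓ C, produce a ∈ A and y ∈ B ⊓ C with x - a = p * y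
  have step : ∀ z : {x : D // x ∈ B ⊓ C},
      ∃ w : ↥A × {x : D // x ∈ B ⊓ C}, z.1 - (w.1 : D) = p * (w.2 : D) := by
    rintro ⟨x, hx⟩
    obtain ⟨a, haA, hd⟩ := happrox x hx
    have hxa_B : x - a ∈ (B : Set D) := sub_mem hx.1 (hA haA).1
    have hxa_C : x - a ∈ (C : Set D) := sub_mem hx.2 (hA haA).2
    have hb : x - a ∈ p • (B : Set D) := by
      rw [← hB]; exact ⟨hxa_B, hd⟩
    have hc : x - a ∈ p • (C : Set D) := by
      rw [← hC]; exact ⟨hxa_C, hd⟩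
    obtain ⟨b, hbB, hb⟩ := hb
    obtain ⟨c, hcC, hc⟩ := hc
    have hbc : b = c := by
      have : p * (b - c) = 0 := by
        simp only [smul_eq_mul] at hb hc
        rw [mul_sub, hb, hc, sub_self]
      exact sub_eq_zero.mp (hreg _ this)
    refine ⟨⟨⟨a, haA⟩, ⟨b, ⟨hbB, hbc ▸ hcC⟩⟩⟩, ?_⟩
    simp only [smul_eq_mul] at hb
    exact hb.symm
  choose F hF using step
  -- A ≤ B ⊓ C is given; prove the reverse
  refine le_antisymm hA ?_
  rintro x hx
  -- iterated approximation
  set X : ℕ → {x : D // x ∈ B ⊓ C} := fun n => (fun z => (F z).2)^[n] ⟨x, hx⟩ with hX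
  have hXsucc : ∀ n, X (n + 1) = (F (X n)).2 := fun n =>
    Function.iterate_succ_apply' _ n _
  set a : ℕ → ↥A := fun n => (F (X n)).1 with ha
  set s : ℕ → ↥A := fun n => ∑ i ∈ Finset.range n, π ^ i * a i with hs
  -- x - s n = p^n * X n in D
  have key : ∀ n, x - ((s n : ↥A) : D) = p ^ n * (X n : D) := by
    intro n
    induction n with
    | zero => simp [hs, hX]
    | succ n ih =>
      have h1 : (s (n + 1) : D) = (s n : D) + p ^ n * (a n : D) := by
        simp [hs, Finset.sum_range_succ, hπ]
      have h2 : (X n : D) - (a n : D) = p * (X (n + 1) : D) := by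
        rw [hXsucc n]; exact hF (X n)
      rw [h1]
      have : x - ((s n : D) + p ^ n * (a n : D))
          = (x - (s n : D)) - p ^ n * (a n : D) := by ring
      rw [this, ih, ← mul_sub, h2, pow_succ]
      ring
  -- the partial sums form a Cauchy sequence for the I-adic topology on A
  have hπm : ∀ m : ℕ, π ^ m ∈ I ^ m := fun m =>
    Ideal.pow_mem_pow (Ideal.mem_span_singleton_self π) m
  have hcauchy : ∀ {m n : ℕ}, m ≤ n → s m ≡ s n [SMOD (I ^ m • ⊤ : Ideal ↥A)] := by
    intro m n hmn
    have hmem : s n - s m ∈ I ^ m := by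
      have hdiff : s n - s m = π ^ m * ∑ i ∈ Finset.Ico m n, π ^ (i - m) * a i := by
        rw [Finset.mul_sum, hs]
        rw [← Finset.sum_Ico_eq_sub _ hmn]
        refine Finset.sum_congr rfl (fun i hi => ?_)
        rw [← mul_assoc, ← pow_add, Nat.add_sub_cancel' (Finset.mem_Ico.mp hi).1]
      rw [hdiff]
      exact Ideal.mul_mem_right _ _ (hπm m)
    have hst : (I ^ m • ⊤ : Ideal ↥A) = I ^ m := by
      rw [smul_eq_mul, Ideal.mul_top]
    refine SModEq.sub_mem.mpr ?_
    rw [hst]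
    simpa [neg_sub] using neg_mem hmem
  obtain ⟨L, hL⟩ := hcomplete.toIsPrecomplete.prec hcauchy
  -- images of I^n in D land in span{p}^n
  have hmap : ∀ (n : ℕ) (z : ↥A), z ∈ I ^ n → (z : D) ∈ Ideal.span {p} ^ n := by
    intro n z hz
    have := Ideal.mem_map_of_mem A.subtype hz
    rwa [Ideal.map_pow, hI, Ideal.map_span, Set.image_singleton] at this
  -- show x = L in D
  have hfinal : x - (L : D) = 0 := by
    have : x - (L : D) ∈ (⨅ n : ℕ, Ideal.span {p} ^ n) := by
      rw [Submodule.mem_iInf]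
      intro n
      have h1 : x - (s n : D) ∈ Ideal.span {p} ^ n := by
        rw [key n, Ideal.span_singleton_pow, Ideal.mem_span_singleton']
        exact ⟨(X n : D), mul_comm _ _⟩
      have h2 : ((s n : ↥A) : D) - (L : D) ∈ Ideal.span {p} ^ n := by
        have := (SModEq.sub_mem).mp (hL n)
        rw [smul_eq_mul, Ideal.mul_top] at this
        have := hmap n _ this
        simpa using this
      have : (x - (s n : D)) + ((s n : D) - (L : D)) ∈ Ideal.span {p} ^ n :=
        add_mem h1 h2
      simpa using this
    rw [hsep] at this
    simpa using this
  have : x = (L : D) := sub_eq_zero.mp hfinal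
  rw [this]
  exact L.2
end
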